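/- If κ(u,v) ≥ k for every edge (u,v) of a finite connected graph G and a real number k, then κ(x,y) ≥ k for every pair of distinct vertices x, y of G. -/
import Mathlib


open scoped Classical
noncomputable section

namespace OR

variable {V : Type*}

/-- The degree of a vertex. -/
def deg (G : SimpleGraph V) (x : V) : ℕ := Nat.card (G.neighborSet x)

/-- The simple random walk measure at a vertex. -/
def rw (G : SimpleGraph V) (x : V) : V → ℝ :=
  fun v => if G.Adj x v then ((deg G x : ℝ))⁻¹ else 0

/-- A coupling between two measures on the vertex set. -/
def IsCoupling (μ ν : V → ℝ) (A : V → V → ℝ) : Prop :=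
  (∀ u v, 0 ≤ A u v) ∧
  (Function.support fun p : V × V => A p.1 p.2).Finite ∧
  (∀ u, ∑ᶠ v, A u v = μ u) ∧ (∀ v, ∑ᶠ u, A u v = ν v)

/-- The 1-Wasserstein distance w.r.t. the graph distance. -/
def W (G : SimpleGraph V) (μ ν : V → ℝ) : ℝ :=
  sInf { r | ∃ A, IsCoupling μ ν A ∧ r = ∑ᶠ u, ∑ᶠ v, A u v * (G.dist u v : ℝ) }

/-- The Ollivier–Ricci curvature. -/
def ricci (G : SimpleGraph V) (x y : V) : ℝ :=
  1 - W G (rw G x) (rw G y) / (G.dist x y : ℝ)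

/-- The number of common neighbours of `x` and `y`. -/
def tri (G : SimpleGraph V) (x y : V) : ℕ := Nat.card {w | G.Adj x w ∧ G.Adj y w}


end OR


section Aux

open OR Finset

variable {V : Type*} [Fintype V]

lemma cost_eq (G : SimpleGraph V) (A : V → V → ℝ) :
    ∑ᶠ u, ∑ᶠ v, A u v * (G.dist u v : ℝ) = ∑ u, ∑ v, A u v * (G.dist u v : ℝ) := by
  rw [finsum_eq_sum_of_fintype]
  exact Finset.sum_congr rfl fun u _ => finsum_eq_sum_of_fintype _

lemma isCoupling_iff (μ ν : V → ℝ) (A : V → V → ℝ) :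
    IsCoupling μ ν A ↔ (∀ u v, 0 ≤ A u v) ∧
      (∀ u, ∑ v, A u v = μ u) ∧ (∀ v, ∑ u, A u v = ν v) := by
  constructor
  · rintro ⟨h1, -, h3, h4⟩
    exact ⟨h1, fun u => by rw [← finsum_eq_sum_of_fintype]; exact h3 u,
      fun v => by rw [← finsum_eq_sum_of_fintype]; exact h4 v⟩
  · rintro ⟨h1, h2, h3⟩
    exact ⟨h1, Set.toFinite _,
      fun u => (finsum_eq_sum_of_fintype _).trans (h2 u),
      fun v => (finsum_eq_sum_of_fintype _).trans (h3 v)⟩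

lemma W_bddBelow (G : SimpleGraph V) (μ ν : V → ℝ) :
    BddBelow { r | ∃ A, IsCoupling μ ν A ∧ r = ∑ᶠ u, ∑ᶠ v, A u v * (G.dist u v : ℝ) } := by
  refine ⟨0, fun r hr => ?_⟩
  obtain ⟨A, hA, rfl⟩ := hr
  rw [cost_eq]
  exact Finset.sum_nonneg fun u _ => Finset.sum_nonneg fun v _ =>
    mul_nonneg (hA.1 u v) (Nat.cast_nonneg _)

lemma W_le (G : SimpleGraph V) {μ ν : V → ℝ} {A : V → V → ℝ} (hA : IsCoupling μ ν A) :
    W G μ ν ≤ ∑ u, ∑ v, A u v * (G.dist u v : ℝ) :=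
  csInf_le (W_bddBelow G μ ν) ⟨A, hA, (cost_eq G A).symm⟩

lemma rw_nonneg (G : SimpleGraph V) (x v : V) : 0 ≤ rw G x v := by
  unfold OR.rw
  split <;> positivity

lemma sum_rw (G : SimpleGraph V) {x z : V} (hz : G.Adj x z) :
    ∑ v, rw G x v = 1 := by
  classical
  have hdeg : 0 < deg G x := by
    have : Nonempty (G.neighborSet x) := ⟨⟨z, hz⟩⟩
    exact Nat.card_pos
  have hdeg' : ((deg G x : ℝ)) ≠ 0 := Nat.cast_ne_zero.mpr hdeg.ne'
  have hcard : (Finset.univ.filter (G.Adj x)).card = deg G x := by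
    rw [← SimpleGraph.neighborFinset_eq_filter]
    rw [OR.deg, Nat.card_eq_fintype_card]
    exact (SimpleGraph.neighborFinset_def G x ▸ Set.toFinset_card _)
  unfold OR.rw
  rw [Finset.sum_ite, Finset.sum_const, Finset.sum_const_zero, add_zero, nsmul_eq_mul,
    hcard, mul_inv_cancel₀ hdeg']

lemma W_nonempty (G : SimpleGraph V) {x z : V} (hxz : G.Adj x z) :
    Set.Nonempty { r | ∃ A, IsCoupling (rw G x) (rw G z) A ∧
      r = ∑ᶠ u, ∑ᶠ v, A u v * (G.dist u v : ℝ) } := by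
  refine ⟨_, fun u v => rw G x u * rw G z v, ?_, rfl⟩
  rw [isCoupling_iff]
  refine ⟨fun u v => mul_nonneg (rw_nonneg G x u) (rw_nonneg G z v), fun u => ?_, fun v => ?_⟩
  · rw [← Finset.mul_sum, sum_rw G hxz.symm, mul_one]
  · rw [← Finset.sum_mul, sum_rw G hxz, one_mul]

lemma W_edge_le (G : SimpleGraph V) (k : ℝ)
    (h : ∀ u v : V, G.Adj u v → k ≤ ricci G u v)
    {u v : V} (huv : G.Adj u v) : W G (rw G u) (rw G v) ≤ 1 - k := by
  have hd : G.dist u v = 1 := SimpleGraph.dist_eq_one_iff_adj.mpr huv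
  have hk := h u v huv
  unfold OR.ricci at hk
  rw [hd] at hk
  push_cast at hk
  linarith

lemma glue (G : SimpleGraph V) (hconn : G.Connected) {μ ν ρ : V → ℝ}
    {B C : V → V → ℝ} (hB : IsCoupling μ ν B) (hC : IsCoupling ν ρ C) :
    ∃ A, IsCoupling μ ρ A ∧
      ∑ u, ∑ v, A u v * (G.dist u v : ℝ) ≤
        ∑ u, ∑ v, B u v * (G.dist u v : ℝ) + ∑ u, ∑ v, C u v * (G.dist u v : ℝ) := by
  rw [isCoupling_iff] at hB hC
  obtain ⟨hB0, hBr, hBc⟩ := hB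
  obtain ⟨hC0, hCr, hCc⟩ := hC
  have hBz : ∀ u w, ν w = 0 → B u w = 0 := by
    intro u w hw
    have h1 : ∑ u', B u' w = 0 := (hBc w).trans hw
    exact (Finset.sum_eq_zero_iff_of_nonneg (fun u' _ => hB0 u' w)).mp h1 u (Finset.mem_univ u)
  have hCz : ∀ w v, ν w = 0 → C w v = 0 := by
    intro w v hw
    have h1 : ∑ v', C w v' = 0 := (hCr w).trans hw
    exact (Finset.sum_eq_zero_iff_of_nonneg (fun v' _ => hC0 w v')).mp h1 v (Finset.mem_univ v)
  have hBdiv : ∀ u w, B u w / ν w * ν w = B u w := by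
    intro u w
    by_cases hw : ν w = 0
    · simp [hw, hBz u w hw]
    · field_simp
  have hCdiv : ∀ w v, ν w / ν w * C w v = C w v := by
    intro w v
    by_cases hw : ν w = 0
    · simp [hw, hCz w v hw]
    · field_simp
  refine ⟨fun u v => ∑ w, B u w / ν w * C w v, ?_, ?_⟩
  · rw [isCoupling_iff]
    refine ⟨fun u v => Finset.sum_nonneg fun w _ =>
        mul_nonneg (div_nonneg (hB0 u w) ((hBc w) ▸ Finset.sum_nonneg fun u' _ => hB0 u' w))
          (hC0 w v), fun u => ?_, fun v => ?_⟩
    · rw [Finset.sum_comm]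
      calc ∑ w, ∑ v, B u w / ν w * C w v = ∑ w, B u w / ν w * ∑ v, C w v := by
            simp_rw [Finset.mul_sum]
        _ = ∑ w, B u w := by
            refine Finset.sum_congr rfl fun w _ => ?_
            rw [hCr w]; exact hBdiv u w
        _ = μ u := hBr u
    · calc ∑ u, ∑ w, B u w / ν w * C w v
          = ∑ w, (∑ u, B u w) / ν w * C w v := by
            rw [Finset.sum_comm]
            refine Finset.sum_congr rfl fun w _ => ?_
            rw [Finset.sum_div, Finset.sum_mul]
        _ = ∑ w, C w v := by
            refine Finset.sum_congr rfl fun w _ => ?_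
            rw [hBc w]; exact hCdiv w v
        _ = ρ v := hCc v
  · have step1 : ∑ u, ∑ v, (∑ w, B u w / ν w * C w v) * (G.dist u v : ℝ) ≤
        ∑ u, ∑ v, ∑ w, B u w / ν w * C w v * ((G.dist u w : ℝ) + (G.dist w v : ℝ)) := by
      refine Finset.sum_le_sum fun u _ => Finset.sum_le_sum fun v _ => ?_
      rw [Finset.sum_mul]
      refine Finset.sum_le_sum fun w _ => ?_
      have hco : 0 ≤ B u w / ν w * C w v :=
        mul_nonneg (div_nonneg (hB0 u w) ((hBc w) ▸ Finset.sum_nonneg fun u' _ => hB0 u' w))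
          (hC0 w v)
      have htri : (G.dist u v : ℝ) ≤ (G.dist u w : ℝ) + (G.dist w v : ℝ) := by
        exact_mod_cast hconn.dist_triangle
      exact mul_le_mul_of_nonneg_left htri hco
    have step2 : ∑ u, ∑ v, ∑ w, B u w / ν w * C w v * ((G.dist u w : ℝ) + (G.dist w v : ℝ)) =
        ∑ u, ∑ v, B u v * (G.dist u v : ℝ) + ∑ u, ∑ v, C u v * (G.dist u v : ℝ) := by
      have e1 : ∑ u, ∑ v, ∑ w, B u w / ν w * C w v * (G.dist u w : ℝ)
          = ∑ u, ∑ v, B u v * (G.dist u v : ℝ) := by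
        refine Finset.sum_congr rfl fun u _ => ?_
        rw [Finset.sum_comm]
        calc ∑ w, ∑ v, B u w / ν w * C w v * (G.dist u w : ℝ)
            = ∑ w, B u w / ν w * (∑ v, C w v) * (G.dist u w : ℝ) := by
              refine Finset.sum_congr rfl fun w _ => ?_
              rw [Finset.mul_sum, Finset.sum_mul]
          _ = ∑ w, B u w * (G.dist u w : ℝ) := by
              refine Finset.sum_congr rfl fun w _ => ?_
              rw [hCr w, hBdiv u w]
      have e2 : ∑ u, ∑ v, ∑ w, B u w / ν w * C w v * (G.dist w v : ℝ)
          = ∑ u, ∑ v, C u v * (G.dist u v : ℝ) := by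
        calc ∑ u, ∑ v, ∑ w, B u w / ν w * C w v * (G.dist w v : ℝ)
            = ∑ u, ∑ w, ∑ v, B u w / ν w * C w v * (G.dist w v : ℝ) :=
              Finset.sum_congr rfl fun u _ => Finset.sum_comm
          _ = ∑ w, ∑ u, ∑ v, B u w / ν w * C w v * (G.dist w v : ℝ) := Finset.sum_comm
          _ = ∑ w, ∑ v, ∑ u, B u w / ν w * C w v * (G.dist w v : ℝ) :=
              Finset.sum_congr rfl fun w _ => Finset.sum_comm
          _ = ∑ w, ∑ v, (∑ u, B u w) / ν w * (C w v * (G.dist w v : ℝ)) := by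
              refine Finset.sum_congr rfl fun w _ => Finset.sum_congr rfl fun v _ => ?_
              rw [Finset.sum_div, Finset.sum_mul]
              exact Finset.sum_congr rfl fun u _ => by ring
          _ = ∑ w, ∑ v, C w v * (G.dist w v : ℝ) := by
              refine Finset.sum_congr rfl fun w _ => Finset.sum_congr rfl fun v _ => ?_
              rw [hBc w]
              by_cases hw : ν w = 0
              · simp [hw, hCz w v hw]
              · field_simp
      calc ∑ u, ∑ v, ∑ w, B u w / ν w * C w v * ((G.dist u w : ℝ) + (G.dist w v : ℝ))
          = ∑ u, ∑ v, ((∑ w, B u w / ν w * C w v * (G.dist u w : ℝ)) +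
              ∑ w, B u w / ν w * C w v * (G.dist w v : ℝ)) := by
            refine Finset.sum_congr rfl fun u _ => Finset.sum_congr rfl fun v _ => ?_
            rw [← Finset.sum_add_distrib]
            exact Finset.sum_congr rfl fun w _ => by ring
        _ = _ := by simp only [Finset.sum_add_distrib]; rw [e1, e2]
    linarith

lemma main_ind (G : SimpleGraph V) (hconn : G.Connected) (k : ℝ)
    (h : ∀ u v : V, G.Adj u v → k ≤ ricci G u v) :
    ∀ n : ℕ, ∀ x y : V, G.dist x y = n → ∀ ε : ℝ, 0 < ε →
      ∃ A : V → V → ℝ, IsCoupling (rw G x) (rw G y) A ∧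
        ∑ u, ∑ v, A u v * (G.dist u v : ℝ) ≤ (1 - k) * n + ε := by
  intro n
  induction n with
  | zero =>
    intro x y hd ε hε
    have hxy : x = y := ((hconn x y).dist_eq_zero_iff).mp hd
    subst hxy
    refine ⟨fun u v => if u = v then rw G x u else 0, ?_, ?_⟩
    · rw [isCoupling_iff]
      refine ⟨fun u v => ?_, fun u => ?_, fun v => ?_⟩
      · split
        · exact rw_nonneg G x u
        · exact le_refl 0
      · simp
      · simp
    · have hz : ∀ u v, (if u = v then rw G x u else 0) * (G.dist u v : ℝ) = 0 := by
        intro u v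
        by_cases huv : u = v
        · subst huv; simp
        · simp [huv]
      simp only [hz, Finset.sum_const_zero]
      push_cast
      linarith
  | succ n ih =>
    intro x y hd ε hε
    obtain ⟨p, hp⟩ := hconn.exists_walk_length_eq_dist x y
    rw [hd] at hp
    cases p with
    | nil => simp at hp
    | @cons _ z _ hxz q =>
      have hq : q.length = n := by
        simp only [SimpleGraph.Walk.length_cons] at hp
        omega
      have hdxz : G.dist x z = 1 := SimpleGraph.dist_eq_one_iff_adj.mpr hxz
      have hzy : G.dist z y = n := by
        have h1 : G.dist z y ≤ n := hq ▸ SimpleGraph.dist_le q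
        have h2 : G.dist x y ≤ G.dist x z + G.dist z y := hconn.dist_triangle
        omega
      have hWxz : W G (rw G x) (rw G z) ≤ 1 - k := W_edge_le G k h hxz
      have hne := W_nonempty G hxz
      have hlt : sInf { r | ∃ A, IsCoupling (rw G x) (rw G z) A ∧
          r = ∑ᶠ u, ∑ᶠ v, A u v * (G.dist u v : ℝ) } <
          W G (rw G x) (rw G z) + ε / 2 := by
        have : W G (rw G x) (rw G z) < W G (rw G x) (rw G z) + ε / 2 := by linarith
        exact this
      obtain ⟨r, hrS, hrlt⟩ := exists_lt_of_csInf_lt hne hlt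
      obtain ⟨B, hB, hrB⟩ := hrS
      have hcostB : ∑ u, ∑ v, B u v * (G.dist u v : ℝ) ≤ 1 - k + ε / 2 := by
        rw [← cost_eq, ← hrB]
        linarith
      obtain ⟨C, hC, hcostC⟩ := ih z y hzy (ε / 2) (by linarith)
      obtain ⟨A, hA, hcostA⟩ := glue G hconn hB hC
      refine ⟨A, hA, ?_⟩
      push_cast
      calc ∑ u, ∑ v, A u v * (G.dist u v : ℝ) ≤ _ := hcostA
        _ ≤ (1 - k + ε / 2) + ((1 - k) * n + ε / 2) := add_le_add hcostB hcostC
        _ = (1 - k) * (n + 1) + ε := by ring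

end Aux

theorem ricci_lower_bound_of_edges {V : Type*} [Fintype V] (G : SimpleGraph V)
    (hconn : G.Connected) (k : ℝ) (h : ∀ u v : V, G.Adj u v → k ≤ OR.ricci G u v) :
    ∀ x y : V, x ≠ y → k ≤ OR.ricci G x y := by
  intro x y hxy
  have hdp : 0 < G.dist x y := hconn.pos_dist_of_ne hxy
  have hW : OR.W G (OR.rw G x) (OR.rw G y) ≤ (1 - k) * (G.dist x y : ℝ) := by
    apply le_of_forall_pos_le_add
    intro ε hε
    obtain ⟨A, hA, hcost⟩ := main_ind G hconn k h (G.dist x y) x y rfl ε hε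
    exact (W_le G hA).trans hcost
  have hdp' : (0 : ℝ) < (G.dist x y : ℝ) := by exact_mod_cast hdp
  unfold OR.ricci
  have hdiv : OR.W G (OR.rw G x) (OR.rw G y) / (G.dist x y : ℝ) ≤ 1 - k := by
    rw [div_le_iff₀ hdp']
    linarith
  linarith
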